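/- In the infinite king grid (vertex set ℤ×ℤ, with (i,j) adjacent to (k,ℓ) iff max(|i−k|,|j−ℓ|) = 1), every self-identifying code S is 3-dominating: for every vertex x, |N[x] ∩ S| ≥ 3. -/

import Mathlib

def closedNbhd {V : Type*} (G : SimpleGraph V) (v : V) : Set V :=
  insert v (G.neighborSet v)

def IsSIC {V : Type*} (G : SimpleGraph V) (S : Set V) : Prop :=
  (∀ x : V, (closedNbhd G x ∩ S).Nonempty) ∧
    ∀ u v : V, u ≠ v →
      ((closedNbhd G u ∩ S) \ (closedNbhd G v ∩ S)).Nonempty ∧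
      ((closedNbhd G v ∩ S) \ (closedNbhd G u ∩ S)).Nonempty

/-- The infinite king grid on ℤ × ℤ. -/
def kingGrid : SimpleGraph (ℤ × ℤ) where
  Adj p q := max |p.1 - q.1| |p.2 - q.2| = 1
  symm := by
    constructor
    intro p q h
    simpa [abs_sub_comm] using h
  loopless := by
    constructor
    intro p h
    simp at h

lemma mem_cn (x y : ℤ × ℤ) :
    y ∈ closedNbhd kingGrid x ↔
      x.1 - 1 ≤ y.1 ∧ y.1 ≤ x.1 + 1 ∧ x.2 - 1 ≤ y.2 ∧ y.2 ≤ x.2 + 1 := by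
  constructor
  · intro h
    rcases Set.mem_insert_iff.1 h with rfl | h
    · omega
    · have h' : max |x.1 - y.1| |x.2 - y.2| = 1 := h
      have h1 : |x.1 - y.1| ≤ 1 := (le_max_left _ _).trans h'.le
      have h2 : |x.2 - y.2| ≤ 1 := (le_max_right _ _).trans h'.le
      rw [abs_le] at h1 h2
      omega
  · intro h
    by_cases hxy : y = x
    · subst hxy; exact Set.mem_insert _ _
    · refine Set.mem_insert_iff.2 (Or.inr ?_)
      have hne : x.1 - y.1 ≠ 0 ∨ x.2 - y.2 ≠ 0 := by
        by_contra hc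
        push_neg at hc
        exact hxy (Prod.ext (by omega) (by omega))
      show max |x.1 - y.1| |x.2 - y.2| = 1
      have h1 : |x.1 - y.1| ≤ 1 := abs_le.2 ⟨by omega, by omega⟩
      have h2 : |x.2 - y.2| ≤ 1 := abs_le.2 ⟨by omega, by omega⟩
      rcases hne with hne | hne
      · exact le_antisymm (max_le h1 h2) ((Int.one_le_abs hne).trans (le_max_left _ _))
      · exact le_antisymm (max_le h1 h2) ((Int.one_le_abs hne).trans (le_max_right _ _))

lemma aux1 (S : Set (ℤ × ℤ))
    (hsep : ∀ u v : ℤ × ℤ, u ≠ v →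
      ((closedNbhd kingGrid u ∩ S) \ (closedNbhd kingGrid v ∩ S)).Nonempty ∧
      ((closedNbhd kingGrid v ∩ S) \ (closedNbhd kingGrid u ∩ S)).Nonempty)
    (x s t : ℤ × ℤ)
    (hs : s ∈ closedNbhd kingGrid x ∩ S) (ht : t ∈ closedNbhd kingGrid x ∩ S)
    (hsub : closedNbhd kingGrid x ∩ S ⊆ {s, t}) (h2 : s.1 - t.1 = 2) : False := by
  have hsx := (mem_cn x s).1 hs.1
  have htx := (mem_cn x t).1 ht.1
  have huv : ((x.1 + 1, x.2) : ℤ × ℤ) ≠ (x.1 + 2, x.2) := by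
    simp [Prod.ext_iff]
  obtain ⟨a, ha1, ha2⟩ := (hsep (x.1 + 1, x.2) (x.1 + 2, x.2) huv).1
  have haS : a ∈ S := ha1.2
  have hav : a ∉ closedNbhd kingGrid (x.1 + 2, x.2) := fun h => ha2 ⟨h, haS⟩
  have hau := (mem_cn (x.1 + 1, x.2) a).1 ha1.1
  rw [mem_cn] at hav
  simp only at hau hav
  have hax : a ∈ closedNbhd kingGrid x ∩ S :=
    ⟨(mem_cn x a).2 (by omega), haS⟩
  have h3 := hsub hax
  simp only [Set.mem_insert_iff, Set.mem_singleton_iff] at h3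
  rcases h3 with rfl | rfl <;> omega

lemma aux2 (S : Set (ℤ × ℤ))
    (hsep : ∀ u v : ℤ × ℤ, u ≠ v →
      ((closedNbhd kingGrid u ∩ S) \ (closedNbhd kingGrid v ∩ S)).Nonempty ∧
      ((closedNbhd kingGrid v ∩ S) \ (closedNbhd kingGrid u ∩ S)).Nonempty)
    (x s t : ℤ × ℤ)
    (hs : s ∈ closedNbhd kingGrid x ∩ S) (ht : t ∈ closedNbhd kingGrid x ∩ S)
    (hsub : closedNbhd kingGrid x ∩ S ⊆ {s, t}) (h2 : s.2 - t.2 = 2) : False := by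
  have hsx := (mem_cn x s).1 hs.1
  have htx := (mem_cn x t).1 ht.1
  have huv : ((x.1, x.2 + 1) : ℤ × ℤ) ≠ (x.1, x.2 + 2) := by
    simp [Prod.ext_iff]
  obtain ⟨a, ha1, ha2⟩ := (hsep (x.1, x.2 + 1) (x.1, x.2 + 2) huv).1
  have haS : a ∈ S := ha1.2
  have hav : a ∉ closedNbhd kingGrid (x.1, x.2 + 2) := fun h => ha2 ⟨h, haS⟩
  have hau := (mem_cn (x.1, x.2 + 1) a).1 ha1.1
  rw [mem_cn] at hav
  simp only at hau hav
  have hax : a ∈ closedNbhd kingGrid x ∩ S :=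
    ⟨(mem_cn x a).2 (by omega), haS⟩
  have h3 := hsub hax
  simp only [Set.mem_insert_iff, Set.mem_singleton_iff] at h3
  rcases h3 with rfl | rfl <;> omega

theorem stmt_18 (S : Set (ℤ × ℤ)) (hS : IsSIC kingGrid S) :
    ∀ x : ℤ × ℤ, 3 ≤ (closedNbhd kingGrid x ∩ S).ncard := by
  obtain ⟨hdom, hsep⟩ := hS
  intro x
  by_contra hlt
  push_neg at hlt
  have hfin : (closedNbhd kingGrid x ∩ S).Finite := by
    apply Set.Finite.subset
      (((Set.finite_Icc (x.1 - 1) (x.1 + 1))).prod (Set.finite_Icc (x.2 - 1) (x.2 + 1)))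
    intro y hy
    have h := (mem_cn x y).1 hy.1
    exact ⟨Set.mem_Icc.2 ⟨h.1, h.2.1⟩, Set.mem_Icc.2 ⟨h.2.2.1, h.2.2.2⟩⟩
  have hne := hdom x
  have hpos : 0 < (closedNbhd kingGrid x ∩ S).ncard := (Set.ncard_pos hfin).2 hne
  obtain ⟨s, t, hs, ht, hsub⟩ :
      ∃ s t, s ∈ closedNbhd kingGrid x ∩ S ∧ t ∈ closedNbhd kingGrid x ∩ S ∧
        closedNbhd kingGrid x ∩ S ⊆ {s, t} := by
    have h12 : (closedNbhd kingGrid x ∩ S).ncard = 1 ∨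
        (closedNbhd kingGrid x ∩ S).ncard = 2 := by omega
    rcases h12 with h | h
    · obtain ⟨a, ha⟩ := Set.ncard_eq_one.mp h
      refine ⟨a, a, by rw [ha]; exact rfl, by rw [ha]; exact rfl, ?_⟩
      rw [ha]; intro z hz; simp only [Set.mem_singleton_iff] at hz; simp [hz]
    · obtain ⟨a, b, hab, hC⟩ := Set.ncard_eq_two.mp h
      exact ⟨a, b, by rw [hC]; simp, by rw [hC]; simp, by rw [hC]⟩
  have hsx := (mem_cn x s).1 hs.1
  have htx := (mem_cn x t).1 ht.1
  have hsub' : closedNbhd kingGrid x ∩ S ⊆ {t, s} := by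
    rw [Set.pair_comm]; exact hsub
  have hcases : s.1 - t.1 = 2 ∨ t.1 - s.1 = 2 ∨ s.2 - t.2 = 2 ∨ t.2 - s.2 = 2 ∨
      (s.1 - t.1 ≤ 1 ∧ t.1 - s.1 ≤ 1 ∧ s.2 - t.2 ≤ 1 ∧ t.2 - s.2 ≤ 1) := by omega
  rcases hcases with h | h | h | h | h
  · exact aux1 S hsep x s t hs ht hsub h
  · exact aux1 S hsep x t s ht hs hsub' h
  · exact aux2 S hsep x s t hs ht hsub h
  · exact aux2 S hsep x t s ht hs hsub' h
  · obtain ⟨y1, hy1, hy1a, hy1b⟩ :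
        ∃ y1, y1 ≠ x.1 ∧ min s.1 t.1 ≤ y1 ∧ y1 ≤ min s.1 t.1 + 1 := by
      by_cases hx : x.1 = min s.1 t.1
      · exact ⟨min s.1 t.1 + 1, by omega, by omega, by omega⟩
      · exact ⟨min s.1 t.1, fun hh => hx hh.symm, le_refl _, by omega⟩
    have hxy : x ≠ (y1, min s.2 t.2) := by
      intro hh
      exact hy1 (congrArg Prod.fst hh).symm
    obtain ⟨a, ha1, ha2⟩ := (hsep x (y1, min s.2 t.2) hxy).1
    have haS : a ∈ S := ha1.2
    have h3 := hsub ha1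
    simp only [Set.mem_insert_iff, Set.mem_singleton_iff] at h3
    apply ha2
    refine ⟨(mem_cn _ a).2 ?_, haS⟩
    simp only
    rcases h3 with rfl | rfl <;> omega
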